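/- arXiv:2403.04863 — 3 statements merged into one kernel-verified Lean document; each statement's English description precedes it below -/
import Mathlib

section
/- Let C ⊆ ℝ^n be a nonempty compact convex set of diameter diam(C), and let Ψ : ℝ^n → ℝ be convex and differentiable with L-Lipschitz gradient. Let f^0 ∈ C and define the Frank–Wolfe iterates f^{k+1} = (1 − γ_k) f^k + γ_k s^k with s^k ∈ argmin_{s ∈ C} ⟨∇Ψ(f^k), s⟩ and step sizes γ_k = 2/(k + 2). Then for every k ≥ 1, Ψ(f^k) − min_{f ∈ C} Ψ(f) ≤ 2 L diam(C)² / (k + 1). -/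
open scoped RealInnerProductSpace
open Set

variable {E : Type*} [NormedAddCommGroup E] [InnerProductSpace ℝ E] [CompleteSpace E]

lemma line_hasDerivAt (Ψ : E → ℝ) (hΨ : Differentiable ℝ Ψ) (x v : E) (t : ℝ) :
    HasDerivAt (fun t : ℝ => Ψ (x + t • v)) ⟪gradient Ψ (x + t • v), v⟫ t := by
  have h1 : HasDerivAt (fun t : ℝ => x + t • v) v t := by
    simpa using ((hasDerivAt_id t).smul_const v).const_add x
  have h2 : HasFDerivAt Ψ (InnerProductSpace.toDual ℝ E (gradient Ψ (x + t • v))) (x + t • v) :=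
    hasGradientAt_iff_hasFDerivAt.mp (hΨ _).hasGradientAt
  simpa [InnerProductSpace.toDual_apply_apply, Function.comp_def] using h2.comp_hasDerivAt t h1

lemma convex_grad_ineq (Ψ : E → ℝ) (hconvΨ : ConvexOn ℝ Set.univ Ψ)
    (hΨ : Differentiable ℝ Ψ) (x y : E) :
    ⟪gradient Ψ x, y - x⟫ ≤ Ψ y - Ψ x := by
  set g : ℝ → ℝ := fun t => Ψ (x + t • (y - x)) with hg
  have hgconv : ConvexOn ℝ Set.univ g := by
    have h0 := hconvΨ.comp_affineMap (AffineMap.lineMap x y : ℝ →ᵃ[ℝ] E)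
    have heq : (Ψ ∘ (AffineMap.lineMap x y : ℝ →ᵃ[ℝ] E)) = g := by
      funext t
      simp [g, AffineMap.lineMap_apply, add_comm]
    rw [preimage_univ, heq] at h0
    exact h0
  have hd0 : HasDerivAt g ⟪gradient Ψ x, y - x⟫ 0 := by
    simpa using line_hasDerivAt Ψ hΨ x (y - x) 0
  have := hgconv.le_slope_of_hasDerivAt (mem_univ (0:ℝ)) (mem_univ 1) zero_lt_one hd0
  simpa [slope_def_field, g] using this

lemma descent_lemma (Ψ : E → ℝ) (hΨ : Differentiable ℝ Ψ) (L : NNReal)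
    (hLip : LipschitzWith L (fun x => gradient Ψ x)) (x y : E) :
    Ψ y ≤ Ψ x + ⟪gradient Ψ x, y - x⟫ + (L : ℝ) / 2 * ‖y - x‖ ^ 2 := by
  set v := y - x with hv
  set h : ℝ → ℝ := fun t => Ψ (x + t • v) - t * ⟪gradient Ψ x, v⟫ - (L : ℝ) / 2 * t ^ 2 * ‖v‖ ^ 2
    with hh
  have hderiv : ∀ t : ℝ, HasDerivAt h
      (⟪gradient Ψ (x + t • v), v⟫ - ⟪gradient Ψ x, v⟫ - (L : ℝ) * t * ‖v‖ ^ 2) t := by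
    intro t
    have h1 := line_hasDerivAt Ψ hΨ x v t
    have h2 : HasDerivAt (fun t : ℝ => t * ⟪gradient Ψ x, v⟫) ⟪gradient Ψ x, v⟫ t := by
      simpa using (hasDerivAt_id t).mul_const ⟪gradient Ψ x, v⟫
    have h3 : HasDerivAt (fun t : ℝ => (L : ℝ) / 2 * t ^ 2 * ‖v‖ ^ 2)
        ((L : ℝ) * t * ‖v‖ ^ 2) t := by
      have := ((hasDerivAt_pow 2 t).const_mul ((L : ℝ) / 2)).mul_const (‖v‖ ^ 2)
      convert this using 1
      · rfl
      · rfl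
      rw [show (2:ℕ) - 1 = 1 from rfl, pow_one]
      ring
    exact (h1.sub h2).sub h3
  have hnonpos : ∀ t ∈ Set.Ioo (0:ℝ) 1, deriv h t ≤ 0 := by
    intro t ht
    rw [(hderiv t).deriv]
    have hCS : ⟪gradient Ψ (x + t • v) - gradient Ψ x, v⟫ ≤
        ‖gradient Ψ (x + t • v) - gradient Ψ x‖ * ‖v‖ := real_inner_le_norm _ _
    have hL : ‖gradient Ψ (x + t • v) - gradient Ψ x‖ ≤ (L : ℝ) * (t * ‖v‖) := by
      have := hLip.dist_le_mul (x + t • v) x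
      rw [dist_eq_norm, dist_eq_norm] at this
      simpa [norm_smul, abs_of_pos ht.1] using this
    have hinner : ⟪gradient Ψ (x + t • v), v⟫ - ⟪gradient Ψ x, v⟫ =
        ⟪gradient Ψ (x + t • v) - gradient Ψ x, v⟫ := by rw [inner_sub_left]
    rw [hinner]
    have hvnn : (0:ℝ) ≤ ‖v‖ := norm_nonneg _
    nlinarith [mul_le_mul_of_nonneg_right hL hvnn]
  have hcont : ContinuousOn h (Set.Icc (0:ℝ) 1) :=
    fun t _ => ((hderiv t).differentiableAt.continuousAt).continuousWithinAt
  have hdiff : DifferentiableOn ℝ h (interior (Set.Icc (0:ℝ) 1)) :=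
    fun t _ => (hderiv t).differentiableAt.differentiableWithinAt
  have hanti : AntitoneOn h (Set.Icc (0:ℝ) 1) := by
    apply antitoneOn_of_deriv_nonpos (convex_Icc 0 1) hcont hdiff
    intro t ht
    rw [interior_Icc] at ht
    exact hnonpos t ht
  have := hanti (Set.mem_Icc.mpr ⟨le_refl 0, zero_le_one⟩)
    (Set.mem_Icc.mpr ⟨zero_le_one, le_refl 1⟩) zero_le_one
  simp only [h, one_smul, zero_smul, add_zero, one_pow, zero_pow, one_mul, zero_mul,
    mul_zero, sub_zero] at this
  have hxy : x + v = y := by simp [hv]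
  rw [hxy] at this
  linarith

/-- Frank–Wolfe with step sizes `γ k = 2/(k+2)` on a nonempty compact
convex set `C`, for a convex differentiable `Ψ` with `L`-Lipschitz gradient,
satisfies `Ψ (f k) − min_{f ∈ C} Ψ f ≤ 2 L diam(C)² / (k + 1)` for every `k ≥ 1`. -/
theorem fw_primal_convergence {n : ℕ}
    (C : Set (EuclideanSpace ℝ (Fin n)))
    (hne : C.Nonempty) (hcomp : IsCompact C) (hconv : Convex ℝ C)
    (Ψ : EuclideanSpace ℝ (Fin n) → ℝ)
    (hconvΨ : ConvexOn ℝ Set.univ Ψ) (hΨ : Differentiable ℝ Ψ)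
    (L : NNReal) (hLip : LipschitzWith L (fun x => gradient Ψ x))
    (f s : ℕ → EuclideanSpace ℝ (Fin n)) (hf0 : f 0 ∈ C)
    (hs : ∀ k, s k ∈ C)
    (hsmin : ∀ k, ∀ y ∈ C, ⟪gradient Ψ (f k), s k⟫ ≤ ⟪gradient Ψ (f k), y⟫)
    (hupd : ∀ k : ℕ,
        f (k + 1) = (1 - 2 / ((k : ℝ) + 2)) • f k + (2 / ((k : ℝ) + 2)) • s k) :
    ∀ k : ℕ, 1 ≤ k →
      Ψ (f k) - sInf (Ψ '' C) ≤ 2 * L * Metric.diam C ^ 2 / ((k : ℝ) + 1) := by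
  -- the minimizer
  obtain ⟨z, hzC, hz⟩ := hcomp.exists_isMinOn hne hΨ.continuous.continuousOn
  have hInf : sInf (Ψ '' C) = Ψ z := by
    apply IsLeast.csInf_eq
    exact ⟨⟨z, hzC, rfl⟩, fun w ⟨u, huC, hu⟩ => hu ▸ hz huC⟩
  rw [hInf]
  set D : ℝ := Metric.diam C with hD
  have hDnn : 0 ≤ D := Metric.diam_nonneg
  have hLnn : (0:ℝ) ≤ (L : ℝ) := L.coe_nonneg
  -- iterates stay in C
  have hfC : ∀ k, f k ∈ C := by
    intro k
    induction k with
    | zero => exact hf0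
    | succ k ih =>
      rw [hupd k]
      have h2 : (0:ℝ) < (k : ℝ) + 2 := by positivity
      have hγ1 : 2 / ((k : ℝ) + 2) ≤ 1 := by
        rw [div_le_one h2]; linarith [Nat.cast_nonneg (α := ℝ) k]
      have hγ0 : 0 ≤ 2 / ((k : ℝ) + 2) := by positivity
      exact hconv ih (hs k) (by linarith) hγ0 (by ring)
  -- key recurrence
  have key : ∀ k : ℕ, Ψ (f (k + 1)) - Ψ z ≤
      (1 - 2 / ((k : ℝ) + 2)) * (Ψ (f k) - Ψ z)
        + (L : ℝ) / 2 * (2 / ((k : ℝ) + 2)) ^ 2 * D ^ 2 := by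
    intro k
    set γ : ℝ := 2 / ((k : ℝ) + 2) with hγ
    have h2 : (0:ℝ) < (k : ℝ) + 2 := by positivity
    have hγ0 : 0 ≤ γ := by positivity
    have hstep : f (k + 1) - f k = γ • (s k - f k) := by
      rw [hupd k]
      simp only [sub_smul, one_smul, smul_sub]
      abel
    have hdesc := descent_lemma Ψ hΨ L hLip (f k) (f (k + 1))
    rw [hstep] at hdesc
    have hinner : ⟪gradient Ψ (f k), γ • (s k - f k)⟫ = γ * ⟪gradient Ψ (f k), s k - f k⟫ :=
      real_inner_smul_right _ _ _
    have hnorm : ‖γ • (s k - f k)‖ ^ 2 = γ ^ 2 * ‖s k - f k‖ ^ 2 := by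
      rw [norm_smul, mul_pow, Real.norm_eq_abs, sq_abs]
    have hdual : ⟪gradient Ψ (f k), s k - f k⟫ ≤ Ψ z - Ψ (f k) := by
      calc ⟪gradient Ψ (f k), s k - f k⟫ ≤ ⟪gradient Ψ (f k), z - f k⟫ := by
            rw [inner_sub_right, inner_sub_right]
            have := hsmin k z hzC
            linarith
        _ ≤ Ψ z - Ψ (f k) := convex_grad_ineq Ψ hconvΨ hΨ (f k) z
    have hdiam : ‖s k - f k‖ ≤ D := by
      rw [← dist_eq_norm]
      exact Metric.dist_le_diam_of_mem hcomp.isBounded (hs k) (hfC k)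
    have hdiam2 : ‖s k - f k‖ ^ 2 ≤ D ^ 2 := by
      exact pow_le_pow_left₀ (norm_nonneg _) hdiam 2
    rw [hinner, hnorm] at hdesc
    have hγ2nn : (0:ℝ) ≤ (L : ℝ) / 2 * γ ^ 2 := by positivity
    nlinarith [mul_le_mul_of_nonneg_right hdual hγ0,
      mul_le_mul_of_nonneg_left hdiam2 hγ2nn]
  -- induction
  intro k hk
  induction k with
  | zero => omega
  | succ k ih =>
    rcases Nat.eq_zero_or_pos k with rfl | hk1
    · have h0 := key 0
      norm_num at h0 ⊢
      nlinarith
    · have ihk := ih hk1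
      have hK : (1:ℝ) ≤ (k : ℝ) := by exact_mod_cast hk1
      have hkey := key k
      have h1 : (0:ℝ) < (k : ℝ) + 1 := by linarith
      have h2 : (0:ℝ) < (k : ℝ) + 2 := by linarith
      have hγle : 2 / ((k : ℝ) + 2) ≤ 1 := by
        rw [div_le_one h2]; linarith
      have hmul : (1 - 2 / ((k : ℝ) + 2)) * (Ψ (f k) - Ψ z) ≤
          (1 - 2 / ((k : ℝ) + 2)) * (2 * (L : ℝ) * D ^ 2 / ((k : ℝ) + 1)) :=
        mul_le_mul_of_nonneg_left ihk (by linarith)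
      have halg : (1 - 2 / ((k : ℝ) + 2)) * (2 * (L : ℝ) * D ^ 2 / ((k : ℝ) + 1))
          + (L : ℝ) / 2 * (2 / ((k : ℝ) + 2)) ^ 2 * D ^ 2
          ≤ 2 * (L : ℝ) * D ^ 2 / ((k : ℝ) + 2) := by
        have hdiffeq : 2 * (L : ℝ) * D ^ 2 / ((k : ℝ) + 2)
            - ((1 - 2 / ((k : ℝ) + 2)) * (2 * (L : ℝ) * D ^ 2 / ((k : ℝ) + 1))
              + (L : ℝ) / 2 * (2 / ((k : ℝ) + 2)) ^ 2 * D ^ 2)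
            = 2 * ((L : ℝ) * D ^ 2) / (((k : ℝ) + 1) * ((k : ℝ) + 2) ^ 2) := by
          field_simp
          ring
        have hpos : 0 ≤ 2 * ((L : ℝ) * D ^ 2) / (((k : ℝ) + 1) * ((k : ℝ) + 2) ^ 2) := by
          positivity
        linarith
      have : Ψ (f (k + 1)) - Ψ z ≤ 2 * (L : ℝ) * D ^ 2 / ((k : ℝ) + 2) := by
        linarith
      have hcast : ((k + 1 : ℕ) : ℝ) + 1 = (k : ℝ) + 2 := by push_cast; ring
      rw [hcast]
      exact this
end

section
/- Let H be a symmetric n × n real matrix, let d^{FW}, d^{k−1}, …, d^{k−N} ∈ ℝ^n be pairwise H-conjugate in the sense that (d^{k−m})ᵀ H d^{k−n} = 0 for all m ≠ n in {1, …, N}, and let γ_{k−1}, …, γ_{k−N} ∈ [0, 1). Set A_m = (d^{k−m})ᵀ H d^{FW} and B_m = (d^{k−m})ᵀ H d^{k−m}, and assume B_m ≠ 0 for all m. Define β_N = −A_N / (B_N (1 − γ_{k−N})) and, recursively for m = N−1, …, 1, β_m = −A_m / (B_m (1 − γ_{k−m})) + (γ_{k−m} / (1 − γ_{k−m})) Σ_{n=m+1}^N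 β_n. Assume 1 + Σ_{m=1}^N β_m ≠ 0, set α_0 = 1 / (1 + Σ_{m=1}^N β_m) and α_m = β_m α_0. Then the direction d^k = α_0 d^{FW} + Σ_{m=1}^N α_m ( Σ_{i=0}^{m−1} (1 − γ_{k−m+i}) d^{k−m+i} − Σ_{i=0}^{m−2} d^{k−m+i+1} ) satisfies the conjugacy conditions (d^{k−m})ᵀ H d^k = 0 for every m ∈ {1, …, N}, and moreover α_0 + Σ_{m=1}^N α_m = 1. -/
open Matrix

/-- Correctness of the N-conjugate Frank–Wolfe coefficients.
With `H` symmetric, previous directions `d (k−1), …, d (k−N)` pairwise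
`H`-conjugate, step sizes `γ (k−m) ∈ [0,1)`, `A m = d(k−m)ᵀ H dFW`,
`B m = d(k−m)ᵀ H d(k−m) ≠ 0`, the recursively defined `β` and the convex-combination
coefficients `α m = β m * α 0`, `α 0 = 1/(1 + ∑ β)`, the resulting direction `dk`
is `H`-conjugate to every previous direction, and the coefficients sum to one. -/
theorem nfw_coefficients_give_conjugate_direction {n N k : ℕ}
    (hN : 1 ≤ N) (hNk : N ≤ k)
    (H : Matrix (Fin n) (Fin n) ℝ) (hH : H.IsSymm)
    (dFW : Fin n → ℝ) (d : ℕ → Fin n → ℝ) (γ : ℕ → ℝ)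
    (hγ : ∀ m ∈ Finset.Icc 1 N, γ (k - m) ∈ Set.Ico (0:ℝ) 1)
    (hconj : ∀ m ∈ Finset.Icc 1 N, ∀ m' ∈ Finset.Icc 1 N, m ≠ m' →
      d (k - m) ⬝ᵥ H.mulVec (d (k - m')) = 0)
    (A B : ℕ → ℝ)
    (hA : ∀ m ∈ Finset.Icc 1 N, A m = d (k - m) ⬝ᵥ H.mulVec dFW)
    (hB : ∀ m ∈ Finset.Icc 1 N, B m = d (k - m) ⬝ᵥ H.mulVec (d (k - m)))
    (hBne : ∀ m ∈ Finset.Icc 1 N, B m ≠ 0)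
    (β : ℕ → ℝ)
    (hβN : β N = -A N / (B N * (1 - γ (k - N))))
    (hβ : ∀ m, 1 ≤ m → m < N →
      β m = -A m / (B m * (1 - γ (k - m)))
        + γ (k - m) / (1 - γ (k - m)) * ∑ j ∈ Finset.Icc (m + 1) N, β j)
    (hden : 1 + ∑ m ∈ Finset.Icc 1 N, β m ≠ 0)
    (α : ℕ → ℝ)
    (hα0 : α 0 = 1 / (1 + ∑ m ∈ Finset.Icc 1 N, β m))
    (hαm : ∀ m ∈ Finset.Icc 1 N, α m = β m * α 0)
    (dk : Fin n → ℝ)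
    (hdk : dk = α 0 • dFW + ∑ m ∈ Finset.Icc 1 N, α m •
        (∑ i ∈ Finset.range m, (1 - γ (k - m + i)) • d (k - m + i)
          - ∑ i ∈ Finset.range (m - 1), d (k - m + i + 1))) :
    (∀ m ∈ Finset.Icc 1 N, d (k - m) ⬝ᵥ H.mulVec dk = 0) ∧
      α 0 + ∑ m ∈ Finset.Icc 1 N, α m = 1 := by
  classical
  have hsum1 : α 0 + ∑ m ∈ Finset.Icc 1 N, α m = 1 := by
    have h1 : ∑ m ∈ Finset.Icc 1 N, α m = (∑ m ∈ Finset.Icc 1 N, β m) * α 0 := by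
      rw [Finset.sum_mul]
      exact Finset.sum_congr rfl hαm
    rw [h1, hα0]
    field_simp
  refine ⟨?_, hsum1⟩
  intro m0 hm0
  obtain ⟨hm01, hm0N⟩ := Finset.mem_Icc.mp hm0
  have hγ0 := hγ m0 hm0
  have hγne : (1 : ℝ) - γ (k - m0) ≠ 0 := by
    have := hγ0.2
    intro h; linarith
  have hB0 := hBne m0 hm0
  set u : Fin n → ℝ := d (k - m0) with hu
  -- bilinearity helpers
  have hds : ∀ (s : Finset ℕ) (f : ℕ → Fin n → ℝ),
      u ⬝ᵥ H.mulVec (∑ i ∈ s, f i) = ∑ i ∈ s, u ⬝ᵥ H.mulVec (f i) := by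
    intro s f
    induction s using Finset.induction with
    | empty => simp
    | @insert a s h ih => simp [Matrix.mulVec_add, dotProduct_add, Finset.sum_insert h, ih]
  -- value of the bilinear form on previous directions
  have hval : ∀ j, 1 ≤ j → j ≤ N →
      u ⬝ᵥ H.mulVec (d (k - j)) = if j = m0 then B m0 else 0 := by
    intro j hj1 hjN
    by_cases h : j = m0
    · subst h
      simp [hu, (hB j (Finset.mem_Icc.mpr ⟨hj1, hjN⟩)).symm]
    · rw [if_neg h]
      exact hconj m0 hm0 j (Finset.mem_Icc.mpr ⟨hj1, hjN⟩) (fun e => h e.symm)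
  -- expand the bilinear form on dk
  rw [hdk, Matrix.mulVec_add, dotProduct_add, Matrix.mulVec_smul, dotProduct_smul,
    hds]
  have hexp : ∀ m ∈ Finset.Icc 1 N,
      u ⬝ᵥ H.mulVec (α m •
        (∑ i ∈ Finset.range m, (1 - γ (k - m + i)) • d (k - m + i)
          - ∑ i ∈ Finset.range (m - 1), d (k - m + i + 1)))
      = α m * ((if m0 ≤ m then (1 - γ (k - m0)) * B m0 else 0)
          - (if m0 < m then B m0 else 0)) := by
    intro m hm
    obtain ⟨hm1, hmN⟩ := Finset.mem_Icc.mp hm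
    rw [Matrix.mulVec_smul, dotProduct_smul, Matrix.mulVec_sub, dotProduct_sub, hds, hds]
    have hS1 : ∑ i ∈ Finset.range m, u ⬝ᵥ H.mulVec ((1 - γ (k - m + i)) • d (k - m + i))
        = if m0 ≤ m then (1 - γ (k - m0)) * B m0 else 0 := by
      by_cases h : m0 ≤ m
      · rw [if_pos h]
        rw [Finset.sum_eq_single (m - m0)]
        · have e1 : k - m + (m - m0) = k - m0 := by omega
          rw [e1, Matrix.mulVec_smul, dotProduct_smul, hval m0 hm01 hm0N, if_pos rfl,
            smul_eq_mul]
        · intro i hi hne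
          have hi' : i < m := Finset.mem_range.mp hi
          have e1 : k - m + i = k - (m - i) := by omega
          rw [e1, Matrix.mulVec_smul, dotProduct_smul,
            hval (m - i) (by omega) (by omega), if_neg (by omega), smul_eq_mul, mul_zero]
        · intro h'
          exact absurd (Finset.mem_range.mpr (by omega)) h'
      · rw [if_neg h]
        apply Finset.sum_eq_zero
        intro i hi
        have hi' : i < m := Finset.mem_range.mp hi
        have e1 : k - m + i = k - (m - i) := by omega
        rw [e1, Matrix.mulVec_smul, dotProduct_smul,
          hval (m - i) (by omega) (by omega), if_neg (by omega), smul_eq_mul, mul_zero]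
    have hS2 : ∑ i ∈ Finset.range (m - 1), u ⬝ᵥ H.mulVec (d (k - m + i + 1))
        = if m0 < m then B m0 else 0 := by
      by_cases h : m0 < m
      · rw [if_pos h]
        rw [Finset.sum_eq_single (m - 1 - m0)]
        · have e1 : k - m + (m - 1 - m0) + 1 = k - m0 := by omega
          rw [e1, hval m0 hm01 hm0N, if_pos rfl]
        · intro i hi hne
          have hi' : i < m - 1 := Finset.mem_range.mp hi
          have e1 : k - m + i + 1 = k - (m - i - 1) := by omega
          rw [e1, hval (m - i - 1) (by omega) (by omega), if_neg (by omega)]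
        · intro h'
          exact absurd (Finset.mem_range.mpr (by omega)) h'
      · rw [if_neg h]
        apply Finset.sum_eq_zero
        intro i hi
        have hi' : i < m - 1 := Finset.mem_range.mp hi
        have e1 : k - m + i + 1 = k - (m - i - 1) := by omega
        rw [e1, hval (m - i - 1) (by omega) (by omega), if_neg (by omega)]
    rw [hS1, hS2, smul_eq_mul]
  rw [Finset.sum_congr rfl hexp]
  -- split the outer sum at m0
  have hsplit : Finset.Icc 1 N = Finset.Icc 1 m0 ∪ Finset.Icc (m0 + 1) N := by
    ext x
    simp only [Finset.mem_Icc, Finset.mem_union]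
    omega
  have hdisj : Disjoint (Finset.Icc 1 m0) (Finset.Icc (m0 + 1) N) := by
    simp only [Finset.disjoint_left, Finset.mem_Icc]
    omega
  rw [hsplit, Finset.sum_union hdisj]
  have hlow : ∑ m ∈ Finset.Icc 1 m0,
      α m * ((if m0 ≤ m then (1 - γ (k - m0)) * B m0 else 0)
          - (if m0 < m then B m0 else 0))
      = α m0 * ((1 - γ (k - m0)) * B m0) := by
    rw [Finset.sum_eq_single m0]
    · rw [if_pos le_rfl, if_neg (lt_irrefl m0), sub_zero]
    · intro m hm hne
      obtain ⟨h1, h2⟩ := Finset.mem_Icc.mp hm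
      rw [if_neg (by omega), if_neg (by omega), sub_zero, mul_zero]
    · intro h'
      exact absurd (Finset.mem_Icc.mpr ⟨hm01, le_rfl⟩) h'
  have hhigh : ∑ m ∈ Finset.Icc (m0 + 1) N,
      α m * ((if m0 ≤ m then (1 - γ (k - m0)) * B m0 else 0)
          - (if m0 < m then B m0 else 0))
      = (∑ m ∈ Finset.Icc (m0 + 1) N, β m) * (α 0 * (-(γ (k - m0) * B m0))) := by
    rw [Finset.sum_mul]
    apply Finset.sum_congr rfl
    intro m hm
    obtain ⟨h1, h2⟩ := Finset.mem_Icc.mp hm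
    rw [if_pos (by omega), if_pos (by omega),
      hαm m (Finset.mem_Icc.mpr ⟨by omega, h2⟩)]
    ring
  rw [hlow, hhigh, hαm m0 hm0, ← hA m0 hm0, smul_eq_mul]
  -- the recursion for β m0
  have hrec : β m0 * (B m0 * (1 - γ (k - m0)))
      = -A m0 + γ (k - m0) * B m0 * ∑ j ∈ Finset.Icc (m0 + 1) N, β j := by
    rcases eq_or_lt_of_le hm0N with h | h
    · subst h
      rw [hβN]
      rw [Finset.Icc_eq_empty (by omega), Finset.sum_empty]
      field_simp
      ring
    · rw [hβ m0 hm01 h]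
      field_simp
  linear_combination α 0 * hrec
end

section
/- Let H be a symmetric n × n real matrix, let d^{FW}, d^{k−1}, …, d^{k−N} ∈ ℝ^n be pairwise H-conjugate ((d^{k−m})ᵀ H d^{k−n} = 0 for m ≠ n in {1, …, N}), let γ_{k−1}, …, γ_{k−N} ∈ ℝ, and let α_0, …, α_N ∈ ℝ. Then for each m ∈ {1, …, N}, the inner product of d^{k−m} with H applied to the direction d^k = α_0 d^{FW} + Σ_{m'=1}^N α_{m'} ( Σ_{i=0}^{m'−1} (1 − γ_{k−m'+i}) d^{k−m'+i} − Σ_{i=0}^{m'−2} d^{k−m'+i+1} ) equals α_0 A_m + (1 − γ_{k−m}) B_m α_m − γ_{k−m} B_m Σ_{i=m+1}^N α_i, where A_m = (d^{k−m})ᵀ H d^{FW} and B_m = (d^{k−m})ᵀ H d^{k−m}. -/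
open Matrix

lemma nfw_dotProduct_finsum {n : ℕ} {ι : Type*} (w : Fin n → ℝ) (s : Finset ι)
    (f : ι → Fin n → ℝ) : w ⬝ᵥ (∑ i ∈ s, f i) = ∑ i ∈ s, w ⬝ᵥ f i := by
  simp [dotProduct, Finset.mul_sum]
  exact Finset.sum_comm

/-- Simplification of the conjugacy condition in N-conjugate
Frank–Wolfe. With `H` symmetric and the previous directions pairwise
`H`-conjugate, for each `m ∈ {1, …, N}` the inner product of `d (k−m)` with
`H` applied to
`dk = α 0 • dFW + ∑_{m'=1}^N α m' • (∑_{i=0}^{m'−1} (1 − γ (k−m'+i)) • d (k−m'+i)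
  − ∑_{i=0}^{m'−2} d (k−m'+i+1))`
equals `α 0 * A m + (1 − γ (k−m)) * B m * α m − γ (k−m) * B m * ∑_{i=m+1}^N α i`,
where `A m = d(k−m)ᵀ H dFW` and `B m = d(k−m)ᵀ H d(k−m)`. -/
theorem nfw_conjugacy_condition_simplification {n N k : ℕ}
    (hN : 1 ≤ N) (hNk : N ≤ k)
    (H : Matrix (Fin n) (Fin n) ℝ) (hH : H.IsSymm)
    (dFW : Fin n → ℝ) (d : ℕ → Fin n → ℝ) (γ : ℕ → ℝ) (α : ℕ → ℝ)
    (hconj : ∀ m ∈ Finset.Icc 1 N, ∀ m' ∈ Finset.Icc 1 N, m ≠ m' →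
      d (k - m) ⬝ᵥ H.mulVec (d (k - m')) = 0) :
    ∀ m ∈ Finset.Icc 1 N,
      d (k - m) ⬝ᵥ H.mulVec (α 0 • dFW + ∑ m' ∈ Finset.Icc 1 N, α m' •
          (∑ i ∈ Finset.range m', (1 - γ (k - m' + i)) • d (k - m' + i)
            - ∑ i ∈ Finset.range (m' - 1), d (k - m' + i + 1)))
        = α 0 * (d (k - m) ⬝ᵥ H.mulVec dFW)
          + (1 - γ (k - m)) * (d (k - m) ⬝ᵥ H.mulVec (d (k - m))) * α m
          - γ (k - m) * (d (k - m) ⬝ᵥ H.mulVec (d (k - m)))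
              * ∑ i ∈ Finset.Icc (m + 1) N, α i := by
  intro m hm
  obtain ⟨hm1, hmN⟩ := Finset.mem_Icc.mp hm
  set w : Fin n → ℝ := Matrix.vecMul (d (k - m)) H with hw
  have hdot : ∀ v : Fin n → ℝ, d (k - m) ⬝ᵥ H.mulVec v = w ⬝ᵥ v := fun v =>
    Matrix.dotProduct_mulVec _ _ _
  -- conjugacy in w-form
  have hc : ∀ j ∈ Finset.Icc 1 N, j ≠ m → w ⬝ᵥ d (k - j) = 0 := by
    intro j hj hne
    rw [← hdot]
    exact hconj m hm j hj (Ne.symm hne)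
  set B : ℝ := w ⬝ᵥ d (k - m) with hB
  -- first inner sum
  have hS1 : ∀ m' ∈ Finset.Icc 1 N,
      (∑ i ∈ Finset.range m', (1 - γ (k - m' + i)) * (w ⬝ᵥ d (k - m' + i)))
        = if m ≤ m' then (1 - γ (k - m)) * B else 0 := by
    intro m' hm'
    obtain ⟨h1, h2⟩ := Finset.mem_Icc.mp hm'
    have hm'k : m' ≤ k := le_trans h2 hNk
    by_cases hle : m ≤ m'
    · rw [if_pos hle]
      rw [Finset.sum_eq_single (m' - m)]
      · have : k - m' + (m' - m) = k - m := by omega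
        rw [this]
      · intro i hi hne
        have hi' : i < m' := Finset.mem_range.mp hi
        have : k - m' + i = k - (m' - i) := by omega
        rw [this, hc (m' - i) (Finset.mem_Icc.mpr ⟨by omega, by omega⟩) (by omega),
          mul_zero]
      · intro hni
        exact absurd (Finset.mem_range.mpr (by omega)) hni
    · rw [if_neg hle]
      apply Finset.sum_eq_zero
      intro i hi
      have hi' : i < m' := Finset.mem_range.mp hi
      have : k - m' + i = k - (m' - i) := by omega
      rw [this, hc (m' - i) (Finset.mem_Icc.mpr ⟨by omega, by omega⟩) (by omega),
        mul_zero]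
  -- second inner sum
  have hS2 : ∀ m' ∈ Finset.Icc 1 N,
      (∑ i ∈ Finset.range (m' - 1), (w ⬝ᵥ d (k - m' + i + 1)))
        = if m + 1 ≤ m' then B else 0 := by
    intro m' hm'
    obtain ⟨h1, h2⟩ := Finset.mem_Icc.mp hm'
    have hm'k : m' ≤ k := le_trans h2 hNk
    by_cases hle : m + 1 ≤ m'
    · rw [if_pos hle]
      rw [Finset.sum_eq_single (m' - m - 1)]
      · have : k - m' + (m' - m - 1) + 1 = k - m := by omega
        rw [this]
      · intro i hi hne
        have hi' : i < m' - 1 := Finset.mem_range.mp hi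
        have : k - m' + i + 1 = k - (m' - i - 1) := by omega
        rw [this, hc (m' - i - 1) (Finset.mem_Icc.mpr ⟨by omega, by omega⟩) (by omega)]
      · intro hni
        exact absurd (Finset.mem_range.mpr (by omega)) hni
    · rw [if_neg hle]
      apply Finset.sum_eq_zero
      intro i hi
      have hi' : i < m' - 1 := Finset.mem_range.mp hi
      have : k - m' + i + 1 = k - (m' - i - 1) := by omega
      rw [this, hc (m' - i - 1) (Finset.mem_Icc.mpr ⟨by omega, by omega⟩) (by omega)]
  -- expand LHS by linearity
  rw [hdot, hdot, hdot]
  rw [dotProduct_add, dotProduct_smul, nfw_dotProduct_finsum]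
  have hterm : ∀ m' ∈ Finset.Icc 1 N,
      w ⬝ᵥ (α m' • (∑ i ∈ Finset.range m', (1 - γ (k - m' + i)) • d (k - m' + i)
            - ∑ i ∈ Finset.range (m' - 1), d (k - m' + i + 1)))
        = α m' * ((if m ≤ m' then (1 - γ (k - m)) * B else 0)
            - (if m + 1 ≤ m' then B else 0)) := by
    intro m' hm'
    rw [dotProduct_smul, dotProduct_sub, nfw_dotProduct_finsum,
      nfw_dotProduct_finsum, smul_eq_mul]
    congr 1
    rw [← hS1 m' hm', ← hS2 m' hm']
    congr 1
    exact Finset.sum_congr rfl fun i _ => dotProduct_smul _ _ _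
  rw [Finset.sum_congr rfl hterm]
  -- split the sum
  have hsplit : ∑ m' ∈ Finset.Icc 1 N, α m' * ((if m ≤ m' then (1 - γ (k - m)) * B else 0)
      - (if m + 1 ≤ m' then B else 0))
      = (∑ m' ∈ Finset.Icc m N, α m' * ((1 - γ (k - m)) * B))
        - (∑ m' ∈ Finset.Icc (m + 1) N, α m' * B) := by
    simp only [mul_sub, mul_ite, mul_zero, Finset.sum_sub_distrib]
    congr 1
    · rw [← Finset.sum_filter]
      congr 1
      ext x
      simp only [Finset.mem_filter, Finset.mem_Icc]
      omega
    · rw [← Finset.sum_filter]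
      congr 1
      ext x
      simp only [Finset.mem_filter, Finset.mem_Icc]
      omega
  rw [hsplit]
  have hIcc : Finset.Icc m N = insert m (Finset.Icc (m + 1) N) := by
    ext x
    simp only [Finset.mem_Icc, Finset.mem_insert]
    omega
  rw [hIcc, Finset.sum_insert (by simp only [Finset.mem_Icc]; omega),
    ← Finset.sum_mul, ← Finset.sum_mul]
  simp only [smul_eq_mul]
  ring
end
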